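/- Let G be a group, g ∈ G, and let K be the normal subgroup of G generated by g. If T is a (left) transversal of C_G(g)·K in G, then the abelianization K/[K,K] is generated by the images of the conjugates g^t for t ∈ T. In particular, if the index |G : C_G(g)K| is finite, then K/[K,K] is generated by at most |G : C_G(g)K| elements. -/

import Mathlib

/-- Let `G` be a group, `g ∈ G`, and `K` the normal subgroup of `G`
generated by `g`.  If `T` is a left transversal of `C_G(g)·K` in `G`, then the
abelianization of `K` is generated by the images of the conjugates `t * g * t⁻¹` for
`t ∈ T`.  In particular, if the index `|G : C_G(g)K|` is finite, then the abelianization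
of `K` is generated by at most `|G : C_G(g)K|` elements. -/
theorem stmt0 (G : Type*) [Group G] (g : G)
    (K : Subgroup G) (hK : K = Subgroup.normalClosure {g})
    (T : Set G)
    (hT : Subgroup.IsComplement T
      ((Subgroup.centralizer {g} ⊔ K : Subgroup G) : Set G)) :
    Subgroup.closure
      {x : Abelianization K |
        ∃ t ∈ T, ∃ h : t * g * t⁻¹ ∈ K, x = Abelianization.of ⟨t * g * t⁻¹, h⟩} = ⊤ ∧
    ((Subgroup.centralizer {g} ⊔ K : Subgroup G).index ≠ 0 →
      ∃ S : Finset (Abelianization K),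
        S.card ≤ (Subgroup.centralizer {g} ⊔ K : Subgroup G).index ∧
        Subgroup.closure (S : Set (Abelianization K)) = ⊤) := by
  haveI hKnormal : K.Normal := hK ▸ Subgroup.normalClosure_normal
  have hgK : g ∈ K := hK ▸ Subgroup.subset_normalClosure rfl
  set S₀ : Set (Abelianization K) :=
    {x : Abelianization K |
      ∃ t ∈ T, ∃ h : t * g * t⁻¹ ∈ K, x = Abelianization.of ⟨t * g * t⁻¹, h⟩} with hS₀
  set H := Subgroup.closure S₀ with hH
  -- the subgroup of `K` of elements mapping into `H`
  set P : Subgroup K := H.comap (Abelianization.of (G := K)) with hP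
  set Q : Subgroup G := P.map K.subtype with hQ
  have hconj : Group.conjugatesOfSet ({g} : Set G) ⊆ (Q : Set G) := by
    intro x hx
    rw [Group.mem_conjugatesOfSet_iff] at hx
    obtain ⟨a, ha, hcj⟩ := hx
    rw [Set.mem_singleton_iff] at ha
    rw [ha] at hcj
    obtain ⟨c, hc⟩ := isConj_iff.mp hcj
    have hx' : x = c * g * c⁻¹ := hc.symm
    -- find the transversal element for `c`
    obtain ⟨⟨t, ht⟩, htc, -⟩ :=
      Subgroup.isComplement_iff_existsUnique_inv_mul_mem.mp hT c
    -- decompose `t⁻¹ * c = k₀ * c₀` with `k₀ ∈ K`, `c₀ ∈ C_G(g)`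
    have htc' : t⁻¹ * c ∈ ((K ⊔ Subgroup.centralizer {g} : Subgroup G) : Set G) := by
      rw [sup_comm]; exact htc
    rw [Subgroup.normal_mul] at htc'
    obtain ⟨k₀, hk₀, c₀, hc₀, hdec⟩ := htc'
    have hc₀g : c₀ * g * c₀⁻¹ = g := by
      have h2 := Subgroup.mem_centralizer_iff.mp hc₀ g rfl
      rw [← h2]; group
    have hxval : x = (t * k₀ * t⁻¹) * (t * g * t⁻¹) * (t * k₀ * t⁻¹)⁻¹ := by
      have hdec' : k₀ * c₀ = t⁻¹ * c := hdec
      have hc' : c = t * (k₀ * c₀) := by rw [hdec']; group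
      rw [hx', hc']
      have h3 : k₀ * c₀ * g * (k₀ * c₀)⁻¹ = k₀ * (c₀ * g * c₀⁻¹) * k₀⁻¹ := by group
      calc t * (k₀ * c₀) * g * (t * (k₀ * c₀))⁻¹
          = t * (k₀ * c₀ * g * (k₀ * c₀)⁻¹) * t⁻¹ := by group
        _ = t * (k₀ * (c₀ * g * c₀⁻¹) * k₀⁻¹) * t⁻¹ := by rw [h3]
        _ = t * (k₀ * g * k₀⁻¹) * t⁻¹ := by rw [hc₀g]
        _ = (t * k₀ * t⁻¹) * (t * g * t⁻¹) * (t * k₀ * t⁻¹)⁻¹ := by group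
    have haK : t * k₀ * t⁻¹ ∈ K := hKnormal.conj_mem k₀ hk₀ t
    have hbK : t * g * t⁻¹ ∈ K := hKnormal.conj_mem g hgK t
    have hxK : x ∈ K := by
      rw [hxval]
      exact K.mul_mem (K.mul_mem haK hbK) (K.inv_mem haK)
    refine ⟨⟨x, hxK⟩, ?_, rfl⟩
    set a' : K := ⟨t * k₀ * t⁻¹, haK⟩ with ha'
    set b' : K := ⟨t * g * t⁻¹, hbK⟩ with hb'
    have hxelt : (⟨x, hxK⟩ : K) = a' * b' * a'⁻¹ := by
      ext; exact hxval
    show Abelianization.of (⟨x, hxK⟩ : K) ∈ H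
    rw [hxelt, map_mul, map_mul, map_inv,
      mul_comm (Abelianization.of a') (Abelianization.of b'),
      mul_inv_cancel_right]
    exact Subgroup.subset_closure ⟨t, ht, hbK, rfl⟩
  have hKQ : K ≤ Q := by
    rw [hK]
    exact (Subgroup.closure_le Q).mpr hconj
  have hPtop : P = ⊤ := by
    rw [eq_top_iff]
    intro k _
    obtain ⟨p, hpP, hpk⟩ := hKQ k.2
    have : p = k := Subtype.ext hpk
    rwa [this] at hpP
  have hsurj : Function.Surjective (Abelianization.of (G := K)) := fun y =>
    Quotient.inductionOn y fun a => ⟨a, rfl⟩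
  have hmain : H = ⊤ := by
    rw [eq_top_iff]
    calc (⊤ : Subgroup (Abelianization K))
        = Subgroup.map (Abelianization.of (G := K)) ⊤ := by
          rw [← MonoidHom.range_eq_map, MonoidHom.range_eq_top_of_surjective _ hsurj]
      _ = Subgroup.map (Abelianization.of (G := K)) P := by rw [hPtop]
      _ ≤ H := Subgroup.map_comap_le _ _
  refine ⟨hmain, fun hindex => ?_⟩
  have hcardT : Nat.card T = (Subgroup.centralizer {g} ⊔ K : Subgroup G).index :=
    hT.card_left
  haveI : Finite T := Nat.finite_of_card_ne_zero (by rw [hcardT]; exact hindex)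
  set f : T → Abelianization K := fun t =>
    Abelianization.of ⟨(t : G) * g * (t : G)⁻¹, hKnormal.conj_mem g hgK t⟩ with hf
  have hrange : S₀ = Set.range f := by
    ext x
    constructor
    · rintro ⟨t, htT, hmem, hx⟩
      exact ⟨⟨t, htT⟩, hx.symm⟩
    · rintro ⟨⟨t, htT⟩, hx⟩
      exact ⟨t, htT, hKnormal.conj_mem g hgK t, hx.symm⟩
  have hfin : (Set.range f).Finite := Set.finite_range f
  refine ⟨hfin.toFinset, ?_, ?_⟩
  · rw [← Nat.card_eq_card_finite_toFinset hfin, ← hcardT]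
    exact Nat.card_le_card_of_surjective (Set.rangeFactorization f)
      Set.rangeFactorization_surjective
  · rw [Set.Finite.coe_toFinset, ← hrange]
    exact hmain
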